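/- Let Γ be a finite simple graph on V = {1,…,n} and v ∈ V a vertex. Then the standard reduced DLA g^v_{Γ,std} contains both elements 𝒵_1 := i·∑_{w : (v,w)∈E} Z_w and 𝒵_2 := i·∑_{(w,w')∈E, w≠v, w'≠v} Z_w Z_{w'} of End(W_v). -/

import Mathlib

open scoped Classical

attribute [local instance 100] LieRing.ofAssociativeRing

noncomputable section

/-- The Hilbert space with basis indexed by bit strings on `S`. -/
abbrev QState (S : Type*) : Type _ := (S → Bool) → ℂ

section Pauli

variable {S : Type*} [Fintype S] [DecidableEq S]

/-- Pauli `Z` operator at site `w`: `Z_w |b⟩ = (-1)^{b_w} |b⟩`. -/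
def pauliZ (w : S) : Module.End ℂ (QState S) where
  toFun g b := (if b w then (-1 : ℂ) else 1) * g b
  map_add' g h := by funext b; simp only [Pi.add_apply]; ring
  map_smul' c g := by
    funext b
    simp only [Pi.smul_apply, smul_eq_mul, RingHom.id_apply]
    ring

/-- Pauli `X` operator at site `w`: `X_w |b⟩ = |b ⊕ e_w⟩`. -/
def pauliX (w : S) : Module.End ℂ (QState S) where
  toFun g b := g (Function.update b w (!(b w)))
  map_add' g h := rfl
  map_smul' c g := rfl

/-- Pauli `Y` operator at site `w`: `Y_w = i · X_w · Z_w`. -/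
def pauliY (w : S) : Module.End ℂ (QState S) := Complex.I • (pauliX w * pauliZ w)

lemma pauliZ_mul_comm (a b : S) : pauliZ a * pauliZ b = pauliZ b * pauliZ a := by
  apply LinearMap.ext
  intro g
  funext x
  show (if x a then (-1 : ℂ) else 1) * ((if x b then (-1 : ℂ) else 1) * g x)
      = (if x b then (-1 : ℂ) else 1) * ((if x a then (-1 : ℂ) else 1) * g x)
  ring

/-- The operator `Z_w Z_{w'}` attached to an unordered pair `e = {w, w'}`. -/
def pauliZZ (e : Sym2 S) : Module.End ℂ (QState S) :=
  Sym2.lift ⟨fun a b => pauliZ a * pauliZ b, pauliZ_mul_comm⟩ e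

/-- The computational basis vector `|b⟩`. -/
def ket (b : S → Bool) : QState S := fun b' => if b' = b then 1 else 0

end Pauli

section Full

variable {V : Type*} [Fintype V] [DecidableEq V]

/-- `X := i ∑_w X_w`, the (rescaled) standard mixer Hamiltonian. -/
def Xop (V : Type*) [Fintype V] [DecidableEq V] : Module.End ℂ (QState V) :=
  Complex.I • ∑ w : V, pauliX w

/-- `Z := i ∑_{(w,w') ∈ E} Z_w Z_{w'}`, the (rescaled) MaxCut problem Hamiltonian. -/
def Zop (Γ : SimpleGraph V) : Module.End ℂ (QState V) :=
  Complex.I • ∑ e ∈ Γ.edgeFinset, pauliZZ e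

/-- The standard dynamical Lie algebra `g_{Γ,std}`. -/
def gstd (Γ : SimpleGraph V) : LieSubalgebra ℝ (Module.End ℂ (QState V)) :=
  LieSubalgebra.lieSpan ℝ _ {Xop V, Zop Γ}

/-- The free dynamical Lie algebra `g_{Γ,free}`. -/
def gfree (Γ : SimpleGraph V) : LieSubalgebra ℝ (Module.End ℂ (QState V)) :=
  LieSubalgebra.lieSpan ℝ _
    ((Set.range fun w : V => Complex.I • (pauliX w : Module.End ℂ (QState V))) ∪
     {A | ∃ a b : V, Γ.Adj a b ∧ A = Complex.I • (pauliZ a * pauliZ b)})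

end Full

section Reduced

variable {V : Type*} [Fintype V] [DecidableEq V]

/-- Pauli `X` at vertex `a` acting on the reduced space at `v` (zero if `a = v`). -/
def pauliXsub (v a : V) : Module.End ℂ (QState {w : V // w ≠ v}) :=
  if h : a = v then 0 else pauliX (⟨a, h⟩ : {w : V // w ≠ v})

/-- Pauli `Z` at vertex `a` acting on the reduced space at `v` (zero if `a = v`). -/
def pauliZsub (v a : V) : Module.End ℂ (QState {w : V // w ≠ v}) :=
  if h : a = v then 0 else pauliZ (⟨a, h⟩ : {w : V // w ≠ v})

lemma pauliZsub_mul_comm (v : V) (a b : V) :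
    pauliZsub v a * pauliZsub v b = pauliZsub v b * pauliZsub v a := by
  unfold pauliZsub
  split_ifs <;> simp [pauliZ_mul_comm]

/-- The operator `Z_w Z_{w'}` on the reduced space at `v`, for an unordered pair. -/
def pauliZZsub (v : V) (e : Sym2 V) : Module.End ℂ (QState {w : V // w ≠ v}) :=
  Sym2.lift ⟨fun a b => pauliZsub v a * pauliZsub v b, pauliZsub_mul_comm v⟩ e

/-- `𝒳 := i ∑_{w ≠ v} X_w`, the reduced mixer. -/
def Xred (v : V) : Module.End ℂ (QState {w : V // w ≠ v}) :=
  Complex.I • ∑ w : {w : V // w ≠ v}, pauliX w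

/-- `𝒵 := i ∑_{(w,w')∈E, w,w'≠v} Z_w Z_{w'} + i ∑_{(v,w)∈E} Z_w`, the reduced problem operator. -/
def Zred (Γ : SimpleGraph V) (v : V) : Module.End ℂ (QState {w : V // w ≠ v}) :=
  Complex.I • ∑ e ∈ Γ.edgeFinset.filter (fun e => v ∉ e), pauliZZsub v e
    + Complex.I • ∑ w ∈ Γ.neighborFinset v, pauliZsub v w

/-- The standard reduced dynamical Lie algebra `g^v_{Γ,std}`. -/
def gstdRed (Γ : SimpleGraph V) (v : V) :
    LieSubalgebra ℝ (Module.End ℂ (QState {w : V // w ≠ v})) :=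
  LieSubalgebra.lieSpan ℝ _ {Xred v, Zred Γ v}

/-- The free reduced dynamical Lie algebra `g^v_{Γ,free}`. -/
def gfreeRed (Γ : SimpleGraph V) (v : V) :
    LieSubalgebra ℝ (Module.End ℂ (QState {w : V // w ≠ v})) :=
  LieSubalgebra.lieSpan ℝ _
    ((Set.range fun w : {w : V // w ≠ v} =>
        Complex.I • (pauliX w : Module.End ℂ (QState {w : V // w ≠ v}))) ∪
     {A | ∃ a b : V, Γ.Adj a b ∧ a ≠ v ∧ b ≠ v ∧
        A = Complex.I • (pauliZsub v a * pauliZsub v b)} ∪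
     {A | ∃ a : V, Γ.Adj v a ∧ A = Complex.I • pauliZsub v a})

/-- The free dynamical Lie algebra `g_{Γ_v,free}` of the reduced graph (no single-site `Z`'s). -/
def gfreeRedGraph (Γ : SimpleGraph V) (v : V) :
    LieSubalgebra ℝ (Module.End ℂ (QState {w : V // w ≠ v})) :=
  LieSubalgebra.lieSpan ℝ _
    ((Set.range fun w : {w : V // w ≠ v} =>
        Complex.I • (pauliX w : Module.End ℂ (QState {w : V // w ≠ v}))) ∪
     {A | ∃ a b : V, Γ.Adj a b ∧ a ≠ v ∧ b ≠ v ∧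
        A = Complex.I • (pauliZsub v a * pauliZsub v b)})

end Reduced
section Misc

variable {V : Type*} [Fintype V] [DecidableEq V]

/-- The value of the cut determined by the assignment `x : V → Bool`. -/
def cutValue (Γ : SimpleGraph V) (x : V → Bool) : ℕ :=
  (Γ.edgeFinset.filter (fun e => ∃ a ∈ e, ∃ b ∈ e, x a ≠ x b)).card

/-- A graph is bipartite if its vertices can be split into two parts with
every edge joining the two parts. -/
def IsBipartiteGraph {W : Type*} (Γ : SimpleGraph W) : Prop :=
  ∃ f : W → Bool, ∀ a b, Γ.Adj a b → f a ≠ f b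

/-- The reduced graph `Γ_v`: the graph induced on `V ∖ {v}`. -/
def reducedGraph {W : Type*} (Γ : SimpleGraph W) (v : W) : SimpleGraph {w : W // w ≠ v} where
  Adj a b := Γ.Adj a.1 b.1
  symm := ⟨fun _ _ h => Γ.symm.symm _ _ h⟩
  loopless := ⟨fun a h => Γ.loopless.irrefl a.1 h⟩

/-- Skew-adjointness (`A* = -A`) with respect to the Hermitian inner product making the
computational basis orthonormal, expressed through matrix entries. -/
def IsSkewAdjointOp {S : Type*} [Fintype S] [DecidableEq S]
    (A : Module.End ℂ (QState S)) : Prop :=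
  ∀ b b' : S → Bool, (starRingEnd ℂ) (A (ket b) b') = - A (ket b') b

/-- The Hadamard-product vector `|h⟩ = ∑_b (∏_{w : h_w = -} (-1)^{b_w}) |b⟩`, where the sign
pattern `h : S → Bool` records a `-` as `true`. -/
def hadamardVec {S : Type*} [Fintype S] [DecidableEq S] (h : S → Bool) : QState S :=
  fun b => ∏ w ∈ Finset.univ.filter (fun w => h w), (if b w then (-1 : ℂ) else 1)

/-- The balance of a bit string on the indices `ι 0, …, ι (m-1)`: the number of `0`'s minus the
number of `1`'s among those positions. -/
def balance {S : Type*} [Fintype S] {m : ℕ} (ι : Fin m → S) (b : S → Bool) : ℤ :=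
  ((Finset.univ.filter (fun j : Fin m => b (ι j) = false)).card : ℤ)
    - ((Finset.univ.filter (fun j : Fin m => b (ι j) = true)).card : ℤ)

/-- `C^v_{j,a}`: vertices at distance `j` from `v` reachable from `v` by a path (walk of length
`j`, necessarily a shortest path) whose intermediate degree parities follow `a`. -/
def Cset (Γ : SimpleGraph V) (v : V) (j : ℕ) (a : Fin j → ZMod 2) : Set V :=
  {w | Γ.dist v w = j ∧
    ∃ p : Γ.Walk v w, p.length = j ∧
      ∀ s : Fin j, (Γ.degree (p.getVert (s.1 + 1)) : ZMod 2) = a s}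

/-- `C^v_{j,ℓ,a}`: vertices `w` at distance `j` from `v` admitting a (distance-increasing) path of
length `ℓ` to some `w'` at distance `j + ℓ`, with degree parities along it following `a`. -/
def Cset2 (Γ : SimpleGraph V) (v : V) (j ℓ : ℕ) (a : Fin ℓ → ZMod 2) : Set V :=
  {w | Γ.dist v w = j ∧
    ∃ w' : V, Γ.dist v w' = j + ℓ ∧
      ∃ p : Γ.Walk w w', p.length = ℓ ∧
        ∀ s : Fin ℓ, (Γ.degree (p.getVert (s.1 + 1)) : ZMod 2) = a s}

end Misc

/-- The `k`-armed spider graph `O_{m_1,…,m_k}`: a central vertex `none`, with `k` paths attached;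
`some ⟨j, s⟩` is the `(s+1)`-st vertex `u_{j,s+1}` of the `j`-th arm. -/
def spider (k : ℕ) (m : Fin k → ℕ) : SimpleGraph (Option (Σ j : Fin k, Fin (m j))) :=
  SimpleGraph.fromRel (fun x y =>
    (∃ (j : Fin k) (s : Fin (m j)), s.1 = 0 ∧ x = none ∧ y = some ⟨j, s⟩) ∨
    (∃ (j : Fin k) (s t : Fin (m j)), t.1 = s.1 + 1 ∧ x = some ⟨j, s⟩ ∧ y = some ⟨j, t⟩))

section Stmt4Aux

variable {S : Type*} [Fintype S] [DecidableEq S]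

/-- Bracket of a finite sum on the left. -/
lemma sum_lie' {ι : Type*} (s : Finset ι) (f : ι → Module.End ℂ (QState S))
    (a : Module.End ℂ (QState S)) : ⁅∑ i ∈ s, f i, a⁆ = ∑ i ∈ s, ⁅f i, a⁆ := by
  simp [Ring.lie_def, Finset.sum_mul, Finset.mul_sum, Finset.sum_sub_distrib]

lemma lie_sum' {ι : Type*} (s : Finset ι) (f : ι → Module.End ℂ (QState S))
    (a : Module.End ℂ (QState S)) : ⁅a, ∑ i ∈ s, f i⁆ = ∑ i ∈ s, ⁅a, f i⁆ := by
  simp [Ring.lie_def, Finset.sum_mul, Finset.mul_sum, Finset.sum_sub_distrib]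

lemma lie_smul_real (r : ℝ) (A M : Module.End ℂ (QState S)) :
    ⁅A, r • M⁆ = r • ⁅A, M⁆ := by
  simp only [Ring.lie_def, smul_sub, mul_smul_comm, smul_mul_assoc]

lemma smul_lie_c (c : ℂ) (A B : Module.End ℂ (QState S)) :
    ⁅c • A, B⁆ = c • ⁅A, B⁆ := by
  simp only [Ring.lie_def, smul_sub, smul_mul_assoc, mul_smul_comm]

lemma lie_smul_c (c : ℂ) (A B : Module.End ℂ (QState S)) :
    ⁅A, c • B⁆ = c • ⁅A, B⁆ := by
  simp only [Ring.lie_def, smul_sub, smul_mul_assoc, mul_smul_comm]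

lemma commute_lie_eq_zero {A B : Module.End ℂ (QState S)} (h : Commute A B) :
    ⁅A, B⁆ = 0 := by
  rw [Ring.lie_def, h.eq, sub_self]

lemma lie_mul_right' {A B C : Module.End ℂ (QState S)} (h : Commute A C) :
    ⁅A, B * C⁆ = ⁅A, B⁆ * C := by
  simp only [Ring.lie_def, sub_mul, mul_assoc]
  rw [← h.eq]

lemma lie_mul_left' {A B C : Module.End ℂ (QState S)} (h : Commute A B) :
    ⁅A, B * C⁆ = B * ⁅A, C⁆ := by
  simp only [Ring.lie_def, mul_sub, mul_assoc]
  rw [← mul_assoc A B C, h.eq, mul_assoc]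

lemma pauliX_sq (w : S) : pauliX w * pauliX w = 1 := by
  apply LinearMap.ext; intro g; funext x
  show g (Function.update (Function.update x w (!(x w))) w
      (!(Function.update x w (!(x w)) w))) = g x
  simp

lemma pauliZ_mul_pauliX_self (w : S) :
    pauliZ w * pauliX w = -(pauliX w * pauliZ w) := by
  apply LinearMap.ext; intro g; funext x
  show (if x w then (-1 : ℂ) else 1) * g (Function.update x w (!(x w)))
      = -((if (Function.update x w (!(x w))) w then (-1 : ℂ) else 1)
          * g (Function.update x w (!(x w))))
  rw [Function.update_self]
  cases hxw : x w <;> simp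

lemma commute_X_X (a b : S) : Commute (pauliX a) (pauliX b) := by
  rcases eq_or_ne a b with rfl | h
  · exact Commute.refl _
  · show pauliX a * pauliX b = pauliX b * pauliX a
    apply LinearMap.ext; intro g; funext x
    show g (Function.update (Function.update x a (!(x a))) b
            (!(Function.update x a (!(x a)) b)))
        = g (Function.update (Function.update x b (!(x b))) a
            (!(Function.update x b (!(x b)) a)))
    simp only [Function.update_of_ne (Ne.symm h), Function.update_of_ne h]
    rw [Function.update_comm h]

lemma commute_X_Z {a b : S} (h : a ≠ b) : Commute (pauliX a) (pauliZ b) := by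
  show pauliX a * pauliZ b = pauliZ b * pauliX a
  apply LinearMap.ext; intro g; funext x
  show (if (Function.update x a (!(x a))) b then (-1 : ℂ) else 1)
        * g (Function.update x a (!(x a)))
      = (if x b then (-1 : ℂ) else 1) * g (Function.update x a (!(x a)))
  rw [Function.update_of_ne (Ne.symm h)]

lemma commute_Z_Z (a b : S) : Commute (pauliZ a) (pauliZ b) :=
  pauliZ_mul_comm a b

/-- Abbreviation for `X_w Z_w`. -/
def Mop (w : S) : Module.End ℂ (QState S) := pauliX w * pauliZ w

lemma commute_X_M {a w : S} (h : a ≠ w) : Commute (pauliX a) (Mop w) :=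
  (commute_X_X a w).mul_right (commute_X_Z h)

lemma commute_Z_M {a w : S} (h : a ≠ w) : Commute (pauliZ a) (Mop w) :=
  ((commute_X_Z (Ne.symm h)).symm).mul_right (commute_Z_Z a w)

lemma commute_M_M {a w : S} (h : a ≠ w) : Commute (Mop a) (Mop w) :=
  (commute_X_M h).mul_left (commute_Z_M h)

lemma lie_X_Z (w : S) : ⁅pauliX w, pauliZ w⁆ = (2 : ℝ) • Mop w := by
  rw [Ring.lie_def, Mop, two_smul, pauliZ_mul_pauliX_self, sub_neg_eq_add]

lemma lie_X_M (w : S) : ⁅pauliX w, Mop w⁆ = (2 : ℝ) • pauliZ w := by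
  have h1 : pauliX w * Mop w = pauliZ w := by
    rw [Mop, ← mul_assoc, pauliX_sq, one_mul]
  have h2 : Mop w * pauliX w = -pauliZ w := by
    have e1 : Mop w * pauliX w = pauliX w * (pauliZ w * pauliX w) := by
      rw [Mop, mul_assoc]
    have e2 : pauliX w * (pauliZ w * pauliX w)
        = -(pauliX w * (pauliX w * pauliZ w)) := by
      rw [pauliZ_mul_pauliX_self]
      exact mul_neg (pauliX w) (pauliX w * pauliZ w)
    rw [e1, e2, ← mul_assoc, pauliX_sq, one_mul]
  rw [Ring.lie_def, h1, h2, sub_neg_eq_add, two_smul]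

/-- The total flip operator `∑_w X_w` (without the `i`). -/
def Xsum (S : Type*) [Fintype S] [DecidableEq S] : Module.End ℂ (QState S) :=
  ∑ w : S, pauliX w

lemma lie_Xsum_Z (w : S) : ⁅Xsum S, pauliZ w⁆ = (2 : ℝ) • Mop w := by
  rw [Xsum, sum_lie', Finset.sum_eq_single w]
  · exact lie_X_Z w
  · exact fun a _ ha => commute_lie_eq_zero (commute_X_Z ha)
  · exact fun h => absurd (Finset.mem_univ w) h

lemma lie_Xsum_M (w : S) : ⁅Xsum S, Mop w⁆ = (2 : ℝ) • pauliZ w := by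
  rw [Xsum, sum_lie', Finset.sum_eq_single w]
  · exact lie_X_M w
  · exact fun a _ ha => commute_lie_eq_zero (commute_X_M ha)
  · exact fun h => absurd (Finset.mem_univ w) h

lemma D2_Z (w : S) : ⁅Xsum S, ⁅Xsum S, pauliZ w⁆⁆ = (4 : ℝ) • pauliZ w := by
  rw [lie_Xsum_Z, lie_smul_real, lie_Xsum_M, smul_smul]; norm_num

lemma D4_Z (w : S) :
    ⁅Xsum S, ⁅Xsum S, ⁅Xsum S, ⁅Xsum S, pauliZ w⁆⁆⁆⁆ = (16 : ℝ) • pauliZ w := by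
  rw [D2_Z, lie_smul_real, lie_smul_real, D2_Z, smul_smul]; norm_num

section Pair

variable {w w' : S}

/-- Reduce a bracket with `Xsum` of a two-site operator to the two relevant sites. -/
lemma lie_Xsum_pair (h : w ≠ w') (P : Module.End ℂ (QState S))
    (hC : ∀ a, a ≠ w → a ≠ w' → Commute (pauliX a) P) :
    ⁅Xsum S, P⁆ = ⁅pauliX w, P⁆ + ⁅pauliX w', P⁆ := by
  rw [Xsum, sum_lie',
    ← Finset.sum_subset (Finset.subset_univ ({w, w'} : Finset S))
      (fun a _ ha => by
        simp only [Finset.mem_insert, Finset.mem_singleton, not_or] at ha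
        exact commute_lie_eq_zero (hC a ha.1 ha.2)),
    Finset.sum_pair h]

lemma lie_Xsum_ZZ (h : w ≠ w') :
    ⁅Xsum S, pauliZ w * pauliZ w'⁆
      = (2 : ℝ) • (Mop w * pauliZ w') + (2 : ℝ) • (pauliZ w * Mop w') := by
  rw [lie_Xsum_pair h _
      (fun a h1 h2 => (commute_X_Z h1).mul_right (commute_X_Z h2)),
    lie_mul_right' (commute_X_Z h), lie_mul_left' (commute_X_Z (Ne.symm h)),
    lie_X_Z, lie_X_Z, smul_mul_assoc, mul_smul_comm]

lemma lie_Xsum_MZ (h : w ≠ w') :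
    ⁅Xsum S, Mop w * pauliZ w'⁆
      = (2 : ℝ) • (pauliZ w * pauliZ w') + (2 : ℝ) • (Mop w * Mop w') := by
  rw [lie_Xsum_pair h _
      (fun a h1 h2 => (commute_X_M h1).mul_right (commute_X_Z h2)),
    lie_mul_right' (commute_X_Z h), lie_mul_left' (commute_X_M (Ne.symm h)),
    lie_X_M, lie_X_Z, smul_mul_assoc, mul_smul_comm]

lemma lie_Xsum_ZM (h : w ≠ w') :
    ⁅Xsum S, pauliZ w * Mop w'⁆
      = (2 : ℝ) • (Mop w * Mop w') + (2 : ℝ) • (pauliZ w * pauliZ w') := by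
  rw [lie_Xsum_pair h _
      (fun a h1 h2 => (commute_X_Z h1).mul_right (commute_X_M h2)),
    lie_mul_right' (commute_X_M h), lie_mul_left' (commute_X_Z (Ne.symm h)),
    lie_X_Z, lie_X_M, smul_mul_assoc, mul_smul_comm]

lemma lie_Xsum_MM (h : w ≠ w') :
    ⁅Xsum S, Mop w * Mop w'⁆
      = (2 : ℝ) • (pauliZ w * Mop w') + (2 : ℝ) • (Mop w * pauliZ w') := by
  rw [lie_Xsum_pair h _
      (fun a h1 h2 => (commute_X_M h1).mul_right (commute_X_M h2)),
    lie_mul_right' (commute_X_M h), lie_mul_left' (commute_X_M (Ne.symm h)),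
    lie_X_M, lie_X_M, smul_mul_assoc, mul_smul_comm]

lemma D2_ZZ (h : w ≠ w') :
    ⁅Xsum S, ⁅Xsum S, pauliZ w * pauliZ w'⁆⁆
      = (8 : ℝ) • (pauliZ w * pauliZ w') + (8 : ℝ) • (Mop w * Mop w') := by
  rw [lie_Xsum_ZZ h]
  simp only [lie_add, lie_smul_real]
  rw [lie_Xsum_MZ h, lie_Xsum_ZM h]
  module

lemma D2_MM (h : w ≠ w') :
    ⁅Xsum S, ⁅Xsum S, Mop w * Mop w'⁆⁆
      = (8 : ℝ) • (Mop w * Mop w') + (8 : ℝ) • (pauliZ w * pauliZ w') := by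
  rw [lie_Xsum_MM h]
  simp only [lie_add, lie_smul_real]
  rw [lie_Xsum_ZM h, lie_Xsum_MZ h]
  module

lemma D4_ZZ (h : w ≠ w') :
    ⁅Xsum S, ⁅Xsum S, ⁅Xsum S, ⁅Xsum S, pauliZ w * pauliZ w'⁆⁆⁆⁆
      = (128 : ℝ) • (pauliZ w * pauliZ w') + (128 : ℝ) • (Mop w * Mop w') := by
  rw [D2_ZZ h]
  simp only [lie_add, lie_smul_real]
  rw [D2_ZZ h, D2_MM h]
  module

end Pair

end Stmt4Aux

section Stmt4Red

variable {V : Type*} [Fintype V] [DecidableEq V]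

/-- `M` at vertex `a` acting on the reduced space at `v` (zero if `a = v`). -/
def pauliMsub (v a : V) : Module.End ℂ (QState {w : V // w ≠ v}) :=
  pauliXsub v a * pauliZsub v a

lemma pauliMsub_eq (v : V) {a : V} (h : a ≠ v) :
    pauliMsub v a = Mop (⟨a, h⟩ : {w : V // w ≠ v}) := by
  rw [pauliMsub, pauliXsub, pauliZsub, dif_neg h, dif_neg h, Mop]

lemma pauliMsub_self (v : V) : pauliMsub v v = 0 := by
  rw [pauliMsub, pauliXsub, dif_pos rfl, zero_mul]

lemma pauliMsub_mul_comm (v : V) (a b : V) :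
    pauliMsub v a * pauliMsub v b = pauliMsub v b * pauliMsub v a := by
  rcases eq_or_ne a v with rfl | ha
  · rw [pauliMsub_self, zero_mul, mul_zero]
  rcases eq_or_ne b v with rfl | hb
  · rw [pauliMsub_self, zero_mul, mul_zero]
  rcases eq_or_ne a b with rfl | hab
  · rfl
  · rw [pauliMsub_eq v ha, pauliMsub_eq v hb]
    exact (commute_M_M (fun hc => hab (congrArg Subtype.val hc))).eq

/-- The operator `M_w M_{w'}` on the reduced space at `v`, for an unordered pair. -/
def pauliMMsub (v : V) (e : Sym2 V) : Module.End ℂ (QState {w : V // w ≠ v}) :=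
  Sym2.lift ⟨fun a b => pauliMsub v a * pauliMsub v b, pauliMsub_mul_comm v⟩ e

variable (Γ : SimpleGraph V) (v : V)

lemma edge_facts {e : Sym2 V} (he : e ∈ Γ.edgeFinset.filter (fun e => v ∉ e)) :
    ∃ (a b : V) (ha : a ≠ v) (hb : b ≠ v),
      e = s(a, b) ∧ (⟨a, ha⟩ : {w : V // w ≠ v}) ≠ ⟨b, hb⟩ := by
  rw [Finset.mem_filter, SimpleGraph.mem_edgeFinset] at he
  obtain ⟨he, hv⟩ := he
  induction e using Sym2.ind with
  | _ a b =>
    rw [SimpleGraph.mem_edgeSet] at he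
    have hab : a ≠ b := he.ne
    have ha : a ≠ v := fun hc => hv (by rw [← hc]; exact Sym2.mem_mk_left a b)
    have hb : b ≠ v := fun hc => hv (by rw [← hc]; exact Sym2.mem_mk_right a b)
    exact ⟨a, b, ha, hb, rfl, fun hc => hab (congrArg Subtype.val hc)⟩

lemma edge_D2 {e : Sym2 V} (he : e ∈ Γ.edgeFinset.filter (fun e => v ∉ e)) :
    ⁅Xsum {w : V // w ≠ v}, ⁅Xsum {w : V // w ≠ v}, pauliZZsub v e⁆⁆
      = (8 : ℝ) • pauliZZsub v e + (8 : ℝ) • pauliMMsub v e := by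
  obtain ⟨a, b, ha, hb, rfl, hne⟩ := edge_facts Γ v he
  have h1 : pauliZZsub v s(a, b)
      = pauliZ (⟨a, ha⟩ : {w : V // w ≠ v}) * pauliZ ⟨b, hb⟩ := by
    rw [pauliZZsub, Sym2.lift_mk]
    show pauliZsub v a * pauliZsub v b = _
    rw [pauliZsub, pauliZsub, dif_neg ha, dif_neg hb]
  have h2 : pauliMMsub v s(a, b)
      = Mop (⟨a, ha⟩ : {w : V // w ≠ v}) * Mop ⟨b, hb⟩ := by
    rw [pauliMMsub, Sym2.lift_mk]
    show pauliMsub v a * pauliMsub v b = _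
    rw [pauliMsub_eq v ha, pauliMsub_eq v hb]
  rw [h1, h2]
  exact D2_ZZ hne

lemma edge_D4 {e : Sym2 V} (he : e ∈ Γ.edgeFinset.filter (fun e => v ∉ e)) :
    ⁅Xsum {w : V // w ≠ v}, ⁅Xsum {w : V // w ≠ v}, ⁅Xsum {w : V // w ≠ v}, ⁅Xsum {w : V // w ≠ v}, pauliZZsub v e⁆⁆⁆⁆
      = (128 : ℝ) • pauliZZsub v e + (128 : ℝ) • pauliMMsub v e := by
  obtain ⟨a, b, ha, hb, rfl, hne⟩ := edge_facts Γ v he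
  have h1 : pauliZZsub v s(a, b)
      = pauliZ (⟨a, ha⟩ : {w : V // w ≠ v}) * pauliZ ⟨b, hb⟩ := by
    rw [pauliZZsub, Sym2.lift_mk]
    show pauliZsub v a * pauliZsub v b = _
    rw [pauliZsub, pauliZsub, dif_neg ha, dif_neg hb]
  have h2 : pauliMMsub v s(a, b)
      = Mop (⟨a, ha⟩ : {w : V // w ≠ v}) * Mop ⟨b, hb⟩ := by
    rw [pauliMMsub, Sym2.lift_mk]
    show pauliMsub v a * pauliMsub v b = _
    rw [pauliMsub_eq v ha, pauliMsub_eq v hb]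
  rw [h1, h2]
  exact D4_ZZ hne

lemma nbr_D2 {w : V} (hw : w ∈ Γ.neighborFinset v) :
    ⁅Xsum {w : V // w ≠ v}, ⁅Xsum {w : V // w ≠ v}, pauliZsub v w⁆⁆ = (4 : ℝ) • pauliZsub v w := by
  have hwv : w ≠ v := ((SimpleGraph.mem_neighborFinset _ _ _).mp hw).ne'
  rw [pauliZsub, dif_neg hwv]
  exact D2_Z _

lemma nbr_D4 {w : V} (hw : w ∈ Γ.neighborFinset v) :
    ⁅Xsum {w : V // w ≠ v}, ⁅Xsum {w : V // w ≠ v}, ⁅Xsum {w : V // w ≠ v}, ⁅Xsum {w : V // w ≠ v}, pauliZsub v w⁆⁆⁆⁆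
      = (16 : ℝ) • pauliZsub v w := by
  have hwv : w ≠ v := ((SimpleGraph.mem_neighborFinset _ _ _).mp hw).ne'
  rw [pauliZsub, dif_neg hwv]
  exact D4_Z _

/-- The key operator identity: `ad(𝒳)⁴(𝒵) + 16 ad(𝒳)²(𝒵) = -48 𝒵₁`. -/
lemma key_identity :
    ⁅Xred v, ⁅Xred v, ⁅Xred v, ⁅Xred v, Zred Γ v⁆⁆⁆⁆
        + (16 : ℝ) • ⁅Xred v, ⁅Xred v, Zred Γ v⁆⁆
      = (-48 : ℝ) • (Complex.I • ∑ w ∈ Γ.neighborFinset v, pauliZsub v w) := by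
  set S := {w : V // w ≠ v}
  set F := Γ.edgeFinset.filter (fun e => v ∉ e) with hF
  set T2 : Module.End ℂ (QState S) := ∑ e ∈ F, pauliZZsub v e with hT2
  set U2 : Module.End ℂ (QState S) := ∑ e ∈ F, pauliMMsub v e with hU2
  set T1 : Module.End ℂ (QState S) := ∑ w ∈ Γ.neighborFinset v, pauliZsub v w with hT1
  have hXred : Xred v = Complex.I • Xsum S := rfl
  have hZred : Zred Γ v = Complex.I • T2 + Complex.I • T1 := rfl
  have hD2T2 : ⁅Xsum S, ⁅Xsum S, T2⁆⁆ = (8 : ℝ) • T2 + (8 : ℝ) • U2 := by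
    rw [hT2, hU2, lie_sum', lie_sum', Finset.smul_sum, Finset.smul_sum,
      ← Finset.sum_add_distrib]
    exact Finset.sum_congr rfl (fun e he => edge_D2 Γ v he)
  have hD4T2 : ⁅Xsum S, ⁅Xsum S, ⁅Xsum S, ⁅Xsum S, T2⁆⁆⁆⁆
      = (128 : ℝ) • T2 + (128 : ℝ) • U2 := by
    rw [hT2, hU2, lie_sum', lie_sum', lie_sum', lie_sum', Finset.smul_sum,
      Finset.smul_sum, ← Finset.sum_add_distrib]
    exact Finset.sum_congr rfl (fun e he => edge_D4 Γ v he)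
  have hD2T1 : ⁅Xsum S, ⁅Xsum S, T1⁆⁆ = (4 : ℝ) • T1 := by
    rw [hT1, lie_sum', lie_sum', Finset.smul_sum]
    exact Finset.sum_congr rfl (fun w hw => nbr_D2 Γ v hw)
  have hD4T1 : ⁅Xsum S, ⁅Xsum S, ⁅Xsum S, ⁅Xsum S, T1⁆⁆⁆⁆ = (16 : ℝ) • T1 := by
    rw [hT1, lie_sum', lie_sum', lie_sum', lie_sum', Finset.smul_sum]
    exact Finset.sum_congr rfl (fun w hw => nbr_D4 Γ v hw)
  have hdd : ∀ M : Module.End ℂ (QState S),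
      ⁅Complex.I • Xsum S, ⁅Complex.I • Xsum S, M⁆⁆ = -⁅Xsum S, ⁅Xsum S, M⁆⁆ := by
    intro M
    rw [smul_lie_c, smul_lie_c, lie_smul_c, smul_smul, Complex.I_mul_I, neg_smul, one_smul]
  rw [hXred, hZred, hdd, hdd]
  simp only [lie_neg, neg_neg, lie_add, lie_smul_c]
  rw [hD4T2, hD4T1, hD2T2, hD2T1]
  module

end Stmt4Red

set_option maxHeartbeats 1000000 in
/-- The standard reduced DLA contains `𝒵₁ = i ∑_{(v,w)∈E} Z_w` and
`𝒵₂ = i ∑_{(w,w')∈E, w,w'≠v} Z_w Z_{w'}`. -/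
theorem stmt4 (n : ℕ) (hn : 1 ≤ n) (Γ : SimpleGraph (Fin n)) (v : Fin n) :
    (Complex.I • ∑ w ∈ Γ.neighborFinset v, pauliZsub v w) ∈ gstdRed Γ v ∧
    (Complex.I • ∑ e ∈ Γ.edgeFinset.filter (fun e => v ∉ e), pauliZZsub v e)
        ∈ gstdRed Γ v := by
  have hX : Xred v ∈ gstdRed Γ v :=
    LieSubalgebra.subset_lieSpan (Set.mem_insert _ _)
  have hZ : Zred Γ v ∈ gstdRed Γ v :=
    LieSubalgebra.subset_lieSpan (Set.mem_insert_of_mem _ rfl)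
  have step : ∀ A : Module.End ℂ (QState {w : Fin n // w ≠ v}),
      A ∈ gstdRed Γ v → ⁅Xred v, A⁆ ∈ gstdRed Γ v :=
    fun _ hA => (gstdRed Γ v).lie_mem hX hA
  have hB1 := step _ hZ
  have hB2 := step _ hB1
  have hB3 := step _ hB2
  have hB4 := step _ hB3
  have hcomb : ⁅Xred v, ⁅Xred v, ⁅Xred v, ⁅Xred v, Zred Γ v⁆⁆⁆⁆
      + (16 : ℝ) • ⁅Xred v, ⁅Xred v, Zred Γ v⁆⁆ ∈ gstdRed Γ v :=
    (gstdRed Γ v).add_mem hB4 ((gstdRed Γ v).smul_mem _ hB2)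
  have h1 : (Complex.I • ∑ w ∈ Γ.neighborFinset v, pauliZsub v w) ∈ gstdRed Γ v := by
    have heq : (Complex.I • ∑ w ∈ Γ.neighborFinset v, pauliZsub v w)
        = (-(1 : ℝ)/48) • (⁅Xred v, ⁅Xred v, ⁅Xred v, ⁅Xred v, Zred Γ v⁆⁆⁆⁆
            + (16 : ℝ) • ⁅Xred v, ⁅Xred v, Zred Γ v⁆⁆) := by
      rw [key_identity Γ v, smul_smul]
      norm_num
    rw [heq]
    exact (gstdRed Γ v).smul_mem _ hcomb
  refine ⟨h1, ?_⟩
  have heq2 : (Complex.I • ∑ e ∈ Γ.edgeFinset.filter (fun e => v ∉ e), pauliZZsub v e)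
      = Zred Γ v - Complex.I • ∑ w ∈ Γ.neighborFinset v, pauliZsub v w :=
    eq_sub_of_add_eq rfl
  rw [heq2]
  exact (gstdRed Γ v).sub_mem hZ h1
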